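/- Let W be the disjoint union of finite sets W(1),…,W(n) with |W(i)| = D(i) and S = ∑_{i=1}^n D(i) even. Let (ω(i,j))_{1≤i,j≤n} be a symmetric matrix of nonnegative integers with ω(i,i) even for all i and D(i) = ∑_{j=1}^n ω(i,j) for all i. Then the number of perfect matchings σ of W such that, for every i < j, exactly ω(i,j) pairs of σ have one endpoint in W(i) and the other in W(j), and for every i exactly ω(i,i)/2 pairs of σ lie inside W(i), equals (∏_{i=1}^n D(i)!) / ( ∏_{i=1}^n (ω(i,i)/2)! · 2^{ω(i,i)/2} · ∏_{i<j} ω(i,j)! ). -/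

import Mathlib

open Finset

open Finset

lemma natCard_sigma {ι : Type} [Fintype ι] (S : ι → Type) [∀ i, Finite (S i)] :
    Nat.card (Σ i, S i) = ∑ i, Nat.card (S i) := by
  classical
  letI : ∀ i, Fintype (S i) := fun i => Fintype.ofFinite _
  simp [Nat.card_eq_fintype_card]

lemma natCard_equiv_of_card_eq {X Y : Type} [Finite X] [Finite Y]
    (h : Nat.card X = Nat.card Y) : Nat.card (X ≃ Y) = (Nat.card X).factorial := by
  classical
  cases nonempty_fintype X
  cases nonempty_fintype Y
  rw [Nat.card_eq_fintype_card, Nat.card_eq_fintype_card] at h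
  rw [Nat.card_eq_fintype_card, Nat.card_eq_fintype_card,
    Fintype.card_equiv (Fintype.equivOfCardEq h)]

def fiber_equiv {n : ℕ} {β : Fin n → Type} (p : (Σ i, β i) → Prop) (i : Fin n) :
    {x : Σ i', β i' // x.1 = i ∧ p x} ≃ {a : β i // p ⟨i, a⟩} where
  toFun z := ⟨cast (congrArg (fun k => β k) z.2.1) z.1.2, by
    obtain ⟨⟨i', a⟩, h1, h2⟩ := z
    subst h1
    simpa using h2⟩
  invFun z := ⟨⟨i, z.1⟩, rfl, z.2⟩
  left_inv z := by
    obtain ⟨⟨i', a⟩, h1, h2⟩ := z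
    subst h1
    rfl
  right_inv z := rfl
def glueFun {β : Type} [DecidableEq β] (b c : β)
    (u : Equiv.Perm {x : β // x ≠ b ∧ x ≠ c}) : β → β :=
  fun x => if hx : x = b then c else if hx' : x = c then b else ↑(u ⟨x, hx, hx'⟩)

lemma glueFun_b {β : Type} [DecidableEq β] (b c : β) (u : Equiv.Perm {x : β // x ≠ b ∧ x ≠ c}) :
    glueFun b c u b = c := by simp [glueFun]

lemma glueFun_c {β : Type} [DecidableEq β] (b c : β) (u : Equiv.Perm {x : β // x ≠ b ∧ x ≠ c})
    (h : c ≠ b) : glueFun b c u c = b := by simp [glueFun, h]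

lemma glueFun_other {β : Type} [DecidableEq β] (b c : β)
    (u : Equiv.Perm {x : β // x ≠ b ∧ x ≠ c}) (x : β) (h1 : x ≠ b) (h2 : x ≠ c) :
    glueFun b c u x = ↑(u ⟨x, h1, h2⟩) := by simp [glueFun, h1, h2]

lemma glueFun_involutive {β : Type} [DecidableEq β] (b c : β) (hc : c ≠ b)
    (u : Equiv.Perm {x : β // x ≠ b ∧ x ≠ c}) (hu : ∀ x, u (u x) = x) :
    Function.Involutive (glueFun b c u) := by
  intro x
  by_cases h1 : x = b
  · subst h1; rw [glueFun_b, glueFun_c _ _ _ hc]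
  by_cases h2 : x = c
  · subst h2; rw [glueFun_c _ _ _ hc, glueFun_b]
  rw [glueFun_other b c u x h1 h2]
  set y := u ⟨x, h1, h2⟩ with hy
  rw [glueFun_other b c u ↑y y.2.1 y.2.2]
  have : (⟨(y : β), y.2.1, y.2.2⟩ : {x : β // x ≠ b ∧ x ≠ c}) = y := rfl
  rw [this, hy, hu]

lemma glueFun_fpf {β : Type} [DecidableEq β] (b c : β) (hc : c ≠ b)
    (u : Equiv.Perm {x : β // x ≠ b ∧ x ≠ c}) (hu : ∀ x, u x ≠ x) :
    ∀ x, glueFun b c u x ≠ x := by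
  intro x
  by_cases h1 : x = b
  · subst h1; rw [glueFun_b]; exact hc
  by_cases h2 : x = c
  · subst h2; rw [glueFun_c _ _ _ hc]; exact fun h => hc h.symm
  rw [glueFun_other b c u x h1 h2]
  exact fun h => hu ⟨x, h1, h2⟩ (Subtype.ext h)

theorem card_fpf (m : ℕ) : ∀ (β : Type) [Fintype β] [DecidableEq β],
    Fintype.card β = 2 * m →
    Nat.card {σ : Equiv.Perm β // (∀ x, σ (σ x) = x) ∧ ∀ x, σ x ≠ x} *
      (Nat.factorial m * 2 ^ m) = Nat.factorial (2 * m) := by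
  induction m with
  | zero =>
    intro β _ _ hc
    haveI : IsEmpty β := Fintype.card_eq_zero_iff.mp (by simpa using hc)
    haveI : Unique {σ : Equiv.Perm β // (∀ x, σ (σ x) = x) ∧ ∀ x, σ x ≠ x} := by
      refine ⟨⟨⟨1, fun x => (IsEmpty.false x).elim, fun x => (IsEmpty.false x).elim⟩⟩, ?_⟩
      rintro ⟨σ, -⟩
      refine Subtype.ext (Equiv.ext fun x => (IsEmpty.false x).elim)
    rw [Nat.card_unique]
    simp [Nat.factorial]
  | succ m ih =>
    intro β _ _ hc
    have hpos : 0 < Fintype.card β := by omega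
    obtain ⟨b⟩ := Fintype.card_pos_iff.mp hpos
    set S : {c : β // c ≠ b} → Type := fun c =>
      {σ' : Equiv.Perm {x : β // x ≠ b ∧ x ≠ c.1} //
        (∀ x, σ' (σ' x) = x) ∧ ∀ x, σ' x ≠ x} with hS
    set Φ : (Σ c : {c : β // c ≠ b}, S c) →
        {σ : Equiv.Perm β // (∀ x, σ (σ x) = x) ∧ ∀ x, σ x ≠ x} := fun z =>
      ⟨(glueFun_involutive b z.1.1 z.1.2 z.2.1 z.2.2.1).toPerm,
        fun x => glueFun_involutive b z.1.1 z.1.2 z.2.1 z.2.2.1 x,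
        glueFun_fpf b z.1.1 z.1.2 z.2.1 z.2.2.2⟩ with hΦ
    have hbij : Function.Bijective Φ := by
      rw [Function.bijective_iff_existsUnique]
      rintro ⟨σ, h1, h2⟩
      have hmem : ∀ x : β, (x ≠ b ∧ x ≠ σ b) ↔ (σ x ≠ b ∧ σ x ≠ σ b) := by
        intro x
        constructor
        · rintro ⟨k1, k2⟩
          refine ⟨fun h => k2 ?_, fun h => k1 (σ.injective h)⟩
          rw [← h, h1]
        · rintro ⟨k1, k2⟩
          refine ⟨fun h => k2 (by rw [h]), fun h => k1 (by rw [h, h1])⟩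
      set σ' : Equiv.Perm {x : β // x ≠ b ∧ x ≠ σ b} :=
        σ.subtypePerm (fun x => (hmem x).symm) with hσ'
      have hσ'inv : ∀ x, σ' (σ' x) = x := fun x => Subtype.ext (h1 x)
      have hσ'fpf : ∀ x, σ' x ≠ x := fun x h => h2 x.1 (congrArg Subtype.val h)
      refine ⟨⟨⟨σ b, h2 b⟩, σ', hσ'inv, hσ'fpf⟩, ?_, ?_⟩
      · apply Subtype.ext
        apply Equiv.ext
        intro x
        show glueFun b (σ b) σ' x = σ x
        by_cases k1 : x = b
        · subst k1; rw [glueFun_b]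
        by_cases k2 : x = σ b
        · subst k2; rw [glueFun_c _ _ _ (h2 b)]
          rw [h1]
        · rw [glueFun_other _ _ _ x k1 k2]; rfl
      · rintro ⟨⟨c, hcb⟩, τ, hτ1, hτ2⟩ heq
        have hval : ∀ x : β, glueFun b c τ x = σ x := fun x =>
          congrFun (congrArg (fun (e : Equiv.Perm β) => (e : β → β))
            (congrArg Subtype.val heq)) x
        have hcσ : c = σ b := by rw [← hval b, glueFun_b]
        subst hcσ
        have hτ : τ = σ' := by
          apply Equiv.ext
          rintro ⟨x, hx1, hx2⟩
          apply Subtype.ext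
          have := hval x
          rw [glueFun_other _ _ _ x hx1 hx2] at this
          exact this
        subst hτ
        rfl
    -- cardinalities
    have hcardc : Fintype.card {c : β // c ≠ b} = 2 * m + 1 := by
      rw [Fintype.card_subtype_compl, Fintype.card_subtype_eq]
      omega
    have hcardS : ∀ c : {c : β // c ≠ b},
        Fintype.card {x : β // x ≠ b ∧ x ≠ c.1} = 2 * m := by
      intro c
      rw [Fintype.card_subtype]
      have h2 : univ.filter (fun x => x ≠ b ∧ x ≠ c.1) = univ \ {b, c.1} := by
        ext x; simp [not_or]
      rw [h2, Finset.card_sdiff_of_subset (by simp), Finset.card_pair (Ne.symm c.2)]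
      simp only [Finset.card_univ]
      omega
    have key : ∀ c : {c : β // c ≠ b},
        Nat.card (S c) * (Nat.factorial m * 2 ^ m) = Nat.factorial (2 * m) :=
      fun c => ih _ (hcardS c)
    have hdom : Nat.card (Σ c : {c : β // c ≠ b}, S c) = Nat.card
        {σ : Equiv.Perm β // (∀ x, σ (σ x) = x) ∧ ∀ x, σ x ≠ x} :=
      Nat.card_eq_of_bijective Φ hbij
    rw [← hdom, natCard_sigma]
    have expand : Nat.factorial (m + 1) * 2 ^ (m + 1)
        = (Nat.factorial m * 2 ^ m) * ((m + 1) * 2) := by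
      rw [Nat.factorial_succ]; ring
    rw [expand, ← mul_assoc, Finset.sum_mul]
    have : ∀ c ∈ (univ : Finset {c : β // c ≠ b}),
        Nat.card (S c) * (Nat.factorial m * 2 ^ m) = Nat.factorial (2 * m) :=
      fun c _ => key c
    rw [Finset.sum_congr rfl this, Finset.sum_const, Finset.card_univ, hcardc, smul_eq_mul]
    have h2m : 2 * (m + 1) = (2 * m + 1) + 1 := by ring
    rw [h2m, Nat.factorial_succ, Nat.factorial_succ]
    ring
lemma sigma_fin_cast {n : ℕ} (ω : Fin n → ℕ) (s : Σ j, Fin (ω j)) (j : Fin n) (h : s.1 = j) :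
    (⟨j, Fin.cast (congrArg ω h) s.2⟩ : Σ j, Fin (ω j)) = s := by
  obtain ⟨j', a⟩ := s
  subst h
  exact congrArg (Sigma.mk j') (Fin.ext (by simp))

theorem card_fiber_fns (n : ℕ) (ω : Fin n → ℕ) (β : Type) [Fintype β] [DecidableEq β]
    (h : Fintype.card β = ∑ j, ω j) :
    Nat.card {t : β → Fin n // ∀ j, Nat.card {x : β // t x = j} = ω j} *
      ∏ j, Nat.factorial (ω j) = Nat.factorial (Fintype.card β) := by
  classical
  set T := {t : β → Fin n // ∀ j, Nat.card {x : β // t x = j} = ω j} with hT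
  set Φ : (Σ t : T, ∀ j, {x : β // t.1 x = j} ≃ Fin (ω j)) → (β ≃ Σ j, Fin (ω j)) :=
    fun z =>
      { toFun := fun x => ⟨z.1.1 x, z.2 (z.1.1 x) ⟨x, rfl⟩⟩
        invFun := fun p => ↑((z.2 p.1).symm p.2)
        left_inv := by
          intro x
          simp
        right_inv := by
          have hleft : ∀ x : β,
              (↑((z.2 (z.1.1 x)).symm (z.2 (z.1.1 x) ⟨x, rfl⟩)) : β) = x := fun x => by simp
          have hGfst : ∀ p : Σ j, Fin (ω j),
              z.1.1 (↑((z.2 p.1).symm p.2)) = p.1 := fun p => ((z.2 p.1).symm p.2).2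
          have hGinj : Function.Injective
              (fun p : Σ j, Fin (ω j) => (↑((z.2 p.1).symm p.2) : β)) := by
            rintro ⟨j, a⟩ ⟨j', a'⟩ hpq
            simp only at hpq
            have h1 : j = j' := by
              have k1 := hGfst ⟨j, a⟩
              have k2 := hGfst ⟨j', a'⟩
              simp only at k1 k2
              rw [← k1, ← k2, hpq]
            subst h1
            have h2 := (z.2 j).symm.injective (Subtype.coe_injective hpq)
            exact congrArg (Sigma.mk j) h2
          intro p
          apply hGinj
          simpa using hleft (↑((z.2 p.1).symm p.2)) } with hΦ
  have hbij : Function.Bijective Φ := by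
    rw [Function.bijective_iff_existsUnique]
    intro e
    set t : β → Fin n := fun x => (e x).1 with ht0
    set g : ∀ j, {x : β // t x = j} ≃ Fin (ω j) := fun j =>
      { toFun := fun x => Fin.cast (congrArg ω x.2) (e ↑x).2
        invFun := fun a => ⟨e.symm ⟨j, a⟩, by simp [ht0]⟩
        left_inv := by
          rintro ⟨x, hx⟩
          have key : (⟨j, Fin.cast (congrArg ω hx) (e x).2⟩ : Σ j, Fin (ω j)) = e x :=
            sigma_fin_cast ω (e x) j hx
          simp only [key]
          simp
        right_inv := by
          intro a
          have key := e.apply_symm_apply ⟨j, a⟩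
          simpa [Fin.ext_iff] using
            congrArg (fun s : (Σ j, Fin (ω j)) => (s.2 : ℕ)) key } with hg
    have ht : ∀ j, Nat.card {x : β // t x = j} = ω j := by
      intro j
      rw [Nat.card_congr (g j), Nat.card_eq_fintype_card, Fintype.card_fin]
    refine ⟨⟨⟨t, ht⟩, g⟩, ?_, ?_⟩
    · apply Equiv.ext
      intro x
      show (⟨t x, g (t x) ⟨x, rfl⟩⟩ : Σ j, Fin (ω j)) = e x
      exact sigma_fin_cast ω (e x) (t x) rfl
    · rintro ⟨⟨t', ht'⟩, f'⟩ heq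
      have hpoint : ∀ x : β, (⟨t' x, f' (t' x) ⟨x, rfl⟩⟩ : Σ j, Fin (ω j)) = e x :=
        fun x => congrFun (congrArg (fun (e : β ≃ Σ j, Fin (ω j)) => (e : β → Σ j, Fin (ω j))) heq) x
      have htt : t' = t := funext fun x => congrArg Sigma.fst (hpoint x)
      subst htt
      have hf : f' = g := by
        funext j
        apply Equiv.ext
        rintro ⟨x, hx⟩
        subst hx
        show f' (t x) ⟨x, rfl⟩ = Fin.cast (congrArg ω rfl) (e x).2
        apply Fin.ext
        simpa [Fin.ext_iff] using
          congrArg (fun s : (Σ j, Fin (ω j)) => (s.2 : ℕ)) (hpoint x)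
      subst hf
      rfl
  have hdom := Nat.card_eq_of_bijective Φ hbij
  have hcod : Nat.card (β ≃ Σ j, Fin (ω j)) = Nat.factorial (Fintype.card β) := by
    rw [Nat.card_eq_fintype_card,
      Fintype.card_equiv (Fintype.equivOfCardEq (by simp [h]))]
  letI : Fintype T := Fintype.ofFinite T
  rw [natCard_sigma] at hdom
  have hterm : ∀ tt : T, Nat.card (∀ j, {x : β // tt.1 x = j} ≃ Fin (ω j))
      = ∏ j, Nat.factorial (ω j) := by
    intro tt
    rw [Nat.card_pi]
    refine Finset.prod_congr rfl fun j _ => ?_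
    have : Nat.card {x : β // tt.1 x = j} = Nat.card (Fin (ω j)) := by
      rw [tt.2 j, Nat.card_eq_fintype_card, Fintype.card_fin]
    rw [natCard_equiv_of_card_eq this, tt.2 j]
  rw [Finset.sum_congr rfl (fun tt _ => hterm tt), Finset.sum_const, Finset.card_univ,
    smul_eq_mul] at hdom
  rw [← hcod, ← hdom, Nat.card_eq_fintype_card]
abbrev Ablk {n : ℕ} {D : Fin n → ℕ} (t : (Σ i : Fin n, Fin (D i)) → Fin n) (i j : Fin n) :
    Type :=
  {x : Σ i' : Fin n, Fin (D i') // x.1 = i ∧ t x = j}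

abbrev PairsLT (n : ℕ) := {p : Fin n × Fin n // p.1 < p.2}

def mglue {n : ℕ} {D : Fin n → ℕ} (t : (Σ i : Fin n, Fin (D i)) → Fin n)
    (f : ∀ p : PairsLT n, Ablk t p.1.1 p.1.2 ≃ Ablk t p.1.2 p.1.1)
    (v : ∀ i, Equiv.Perm (Ablk t i i)) :
    (Σ i : Fin n, Fin (D i)) → (Σ i : Fin n, Fin (D i)) := fun x =>
  if h : x.1 < t x then ↑(f ⟨(x.1, t x), h⟩ ⟨x, rfl, rfl⟩)
  else if h' : t x < x.1 then ↑((f ⟨(t x, x.1), h'⟩).symm ⟨x, rfl, rfl⟩)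
  else ↑(v x.1 ⟨x, rfl, le_antisymm (not_lt.mp h) (not_lt.mp h')⟩)

section evals
variable {n : ℕ} {D : Fin n → ℕ} (t : (Σ i : Fin n, Fin (D i)) → Fin n)
    (f : ∀ p : PairsLT n, Ablk t p.1.1 p.1.2 ≃ Ablk t p.1.2 p.1.1)
    (v : ∀ i, Equiv.Perm (Ablk t i i))

lemma mglue_lt (i j : Fin n) (hij : i < j) (x : Σ i' : Fin n, Fin (D i'))
    (hx : x.1 = i ∧ t x = j) : mglue t f v x = ↑(f ⟨(i, j), hij⟩ ⟨x, hx⟩) := by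
  obtain ⟨h1, h2⟩ := hx
  subst h1; subst h2
  show mglue t f v x = ↑(f ⟨(x.1, t x), hij⟩ ⟨x, rfl, rfl⟩)
  rw [mglue, dif_pos hij]

lemma mglue_gt (i j : Fin n) (hij : i < j) (x : Σ i' : Fin n, Fin (D i'))
    (hx : x.1 = j ∧ t x = i) : mglue t f v x = ↑((f ⟨(i, j), hij⟩).symm ⟨x, hx⟩) := by
  obtain ⟨h1, h2⟩ := hx
  subst h1; subst h2
  show mglue t f v x = ↑((f ⟨(t x, x.1), hij⟩).symm ⟨x, rfl, rfl⟩)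
  rw [mglue, dif_neg (asymm hij), dif_pos hij]

lemma mglue_diag (i : Fin n) (x : Σ i' : Fin n, Fin (D i'))
    (hx : x.1 = i ∧ t x = i) : mglue t f v x = ↑(v i ⟨x, hx⟩) := by
  obtain ⟨h1, h2⟩ := hx
  subst h1
  rw [mglue, dif_neg (by simp [h2]), dif_neg (by simp [h2])]

lemma mglue_fst (x : Σ i' : Fin n, Fin (D i')) :
    (mglue t f v x).1 = t x ∧ t (mglue t f v x) = x.1 := by
  rcases lt_trichotomy x.1 (t x) with h | h | h
  · rw [mglue_lt t f v x.1 (t x) h x ⟨rfl, rfl⟩]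
    exact (f ⟨(x.1, t x), h⟩ ⟨x, rfl, rfl⟩).2
  · rw [mglue_diag t f v x.1 x ⟨rfl, h.symm⟩]
    refine ⟨?_, ?_⟩
    · rw [(v x.1 ⟨x, rfl, h.symm⟩).2.1, h]
    · exact (v x.1 ⟨x, rfl, h.symm⟩).2.2.trans rfl
  · rw [mglue_gt t f v (t x) x.1 h x ⟨rfl, rfl⟩]
    exact ((f ⟨(t x, x.1), h⟩).symm ⟨x, rfl, rfl⟩).2

lemma mglue_involutive (hv : ∀ i x, v i (v i x) = x) :
    Function.Involutive (mglue t f v) := by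
  intro x
  rcases lt_trichotomy x.1 (t x) with h | h | h
  · rw [mglue_lt t f v x.1 (t x) h x ⟨rfl, rfl⟩]
    set w := f ⟨(x.1, t x), h⟩ ⟨x, rfl, rfl⟩ with hw
    rw [mglue_gt t f v x.1 (t x) h ↑w w.2]
    have : (⟨↑w, w.2⟩ : Ablk t (t x) x.1) = w := rfl
    rw [this, hw, Equiv.symm_apply_apply]
  · rw [mglue_diag t f v x.1 x ⟨rfl, h.symm⟩]
    set w := v x.1 ⟨x, rfl, h.symm⟩ with hw
    have h2 : (↑w : Σ i' : Fin n, Fin (D i')).1 = x.1 ∧ t ↑w = x.1 := w.2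
    rw [mglue_diag t f v x.1 ↑w h2]
    have : (⟨↑w, h2⟩ : Ablk t x.1 x.1) = w := rfl
    rw [this, hw, hv]
  · rw [mglue_gt t f v (t x) x.1 h x ⟨rfl, rfl⟩]
    set w := (f ⟨(t x, x.1), h⟩).symm ⟨x, rfl, rfl⟩ with hw
    rw [mglue_lt t f v (t x) x.1 h ↑w w.2]
    have : (⟨↑w, w.2⟩ : Ablk t (t x) x.1) = w := rfl
    rw [this, hw, Equiv.apply_symm_apply]

lemma mglue_fpf (hv : ∀ i x, v i x ≠ x) : ∀ x, mglue t f v x ≠ x := by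
  intro x heq
  rcases lt_trichotomy x.1 (t x) with h | h | h
  · have := (mglue_fst t f v x).1
    rw [heq] at this
    exact absurd this.symm (ne_of_gt h)
  · rw [mglue_diag t f v x.1 x ⟨rfl, h.symm⟩] at heq
    exact hv x.1 ⟨x, rfl, h.symm⟩ (Subtype.ext heq)
  · have := (mglue_fst t f v x).1
    rw [heq] at this
    exact absurd this (ne_of_gt h) -- t x < x.1, this : x.1 = t x?
lemma prod_sq_split (n : ℕ) (ω : Fin n → Fin n → ℕ) (hsym : ∀ i j, ω i j = ω j i) :
    (∏ i, ∏ j, (ω i j).factorial) =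
      (∏ p ∈ Finset.univ.filter (fun p : Fin n × Fin n => p.1 < p.2), (ω p.1 p.2).factorial) *
      (∏ p ∈ Finset.univ.filter (fun p : Fin n × Fin n => p.1 < p.2), (ω p.1 p.2).factorial) *
      ∏ i, (ω i i).factorial := by
  classical
  have s1 := Finset.prod_filter_mul_prod_filter_not (univ : Finset (Fin n × Fin n))
    (fun p => p.1 < p.2) (fun p => (ω p.1 p.2).factorial)
  have s2 := Finset.prod_filter_mul_prod_filter_not
    (univ.filter (fun p : Fin n × Fin n => ¬ p.1 < p.2))
    (fun p => p.2 < p.1) (fun p => (ω p.1 p.2).factorial)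
  have e1 : (univ.filter (fun p : Fin n × Fin n => ¬ p.1 < p.2)).filter
      (fun p => p.2 < p.1) = univ.filter (fun p : Fin n × Fin n => p.2 < p.1) := by
    rw [Finset.filter_filter]
    ext p
    simp only [Finset.mem_filter, Finset.mem_univ, true_and]
    exact ⟨fun h => h.2, fun h => ⟨asymm h, h⟩⟩
  have e2 : (univ.filter (fun p : Fin n × Fin n => ¬ p.1 < p.2)).filter
      (fun p => ¬ p.2 < p.1) = univ.filter (fun p : Fin n × Fin n => p.1 = p.2) := by
    rw [Finset.filter_filter]
    ext p
    simp only [Finset.mem_filter, Finset.mem_univ, true_and]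
    constructor
    · rintro ⟨h1, h2⟩
      exact le_antisymm (not_lt.mp h2) (not_lt.mp h1)
    · intro h
      constructor <;> simp [h]
  have e3 : ∏ p ∈ univ.filter (fun p : Fin n × Fin n => p.2 < p.1), (ω p.1 p.2).factorial
      = ∏ p ∈ univ.filter (fun p : Fin n × Fin n => p.1 < p.2), (ω p.1 p.2).factorial := by
    refine Finset.prod_nbij' (fun p => (p.2, p.1)) (fun p => (p.2, p.1)) ?_ ?_ ?_ ?_ ?_ <;>
      simp +contextual [hsym _ _]
  have e4 : ∏ p ∈ univ.filter (fun p : Fin n × Fin n => p.1 = p.2), (ω p.1 p.2).factorial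
      = ∏ i, (ω i i).factorial := by
    refine Finset.prod_nbij' (fun p => p.1) (fun i => (i, i)) ?_ ?_ ?_ ?_ ?_ <;>
      simp +contextual [Prod.ext_iff]
  have hprod : (∏ i, ∏ j, (ω i j).factorial) = ∏ p : Fin n × Fin n, (ω p.1 p.2).factorial := by
    rw [Fintype.prod_prod_type]
  rw [hprod, ← s1, ← s2, e1, e2, e3, e4]
  ring
set_option maxHeartbeats 1000000 in
/-- Counting perfect matchings of `W = ⨆ i W(i)` (`|W(i)| = D(i)`)
realizing a prescribed symmetric multiplicity matrix `ω` (with even diagonal and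
`D(i) = ∑_j ω(i,j)`).  A perfect matching is encoded as a fixed-point-free involution
`σ`; the condition `#{x : x ∈ W(i), σ x ∈ W(j)} = ω i j` says that for `i < j` exactly
`ω(i,j)` pairs join `W(i)` and `W(j)`, and exactly `ω(i,i)/2` pairs lie inside `W(i)`.
The number of such matchings times
`∏_i (ω(i,i)/2)! 2^{ω(i,i)/2} ∏_{i<j} ω(i,j)!` equals `∏_i D(i)!`. -/
theorem stmt_1 (n : ℕ) (D : Fin n → ℕ) (ω : Fin n → Fin n → ℕ)
    (hsym : ∀ i j, ω i j = ω j i)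
    (heven : ∀ i, Even (ω i i))
    (hdeg : ∀ i, D i = ∑ j, ω i j)
    (hS : Even (∑ i, D i)) :
    Nat.card {σ : Equiv.Perm (Σ i : Fin n, Fin (D i)) //
        (∀ x, σ (σ x) = x) ∧ (∀ x, σ x ≠ x) ∧
        ∀ i j : Fin n,
          Nat.card {x : Σ i' : Fin n, Fin (D i') // x.1 = i ∧ (σ x).1 = j} = ω i j} *
      ((∏ i, Nat.factorial (ω i i / 2) * 2 ^ (ω i i / 2)) *
        ∏ p ∈ Finset.univ.filter (fun p : Fin n × Fin n => p.1 < p.2),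
          Nat.factorial (ω p.1 p.2)) =
    ∏ i, Nat.factorial (D i) := by
  classical
  set T := {t : (Σ i : Fin n, Fin (D i)) → Fin n //
    ∀ i j, Nat.card (Ablk t i j) = ω i j} with hT
  set M : T → Type := fun t =>
    (∀ p : PairsLT n, Ablk t.1 p.1.1 p.1.2 ≃ Ablk t.1 p.1.2 p.1.1) ×
    (∀ i, {u : Equiv.Perm (Ablk t.1 i i) // (∀ x, u (u x) = x) ∧ ∀ x, u x ≠ x}) with hM
  haveI hMfin : ∀ t : T, Finite (M t) := by
    intro t; rw [hM]; infer_instance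
  set Φ : (Σ t : T, M t) → {σ : Equiv.Perm (Σ i : Fin n, Fin (D i)) //
      (∀ x, σ (σ x) = x) ∧ (∀ x, σ x ≠ x) ∧
      ∀ i j : Fin n,
        Nat.card {x : Σ i' : Fin n, Fin (D i') // x.1 = i ∧ (σ x).1 = j} = ω i j} :=
    fun z =>
      ⟨(mglue_involutive z.1.1 z.2.1 (fun i => (z.2.2 i).1) (fun i x => (z.2.2 i).2.1 x)).toPerm,
        mglue_involutive z.1.1 z.2.1 (fun i => (z.2.2 i).1) (fun i x => (z.2.2 i).2.1 x),
        mglue_fpf z.1.1 z.2.1 (fun i => (z.2.2 i).1) (fun i x => (z.2.2 i).2.2 x),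
        fun i j => by
          have h5 : ∀ x : Σ i' : Fin n, Fin (D i'),
              (mglue z.1.1 z.2.1 (fun i => (z.2.2 i).1) x).1 = z.1.1 x :=
            fun x => (mglue_fst _ _ _ x).1
          exact (Nat.card_congr (Equiv.subtypeEquivRight (fun x =>
            ⟨fun hx => ⟨hx.1, (h5 x).symm.trans hx.2⟩,
             fun hx => ⟨hx.1, (h5 x).trans hx.2⟩⟩))).trans (z.1.2 i j)⟩ with hΦ
  have hbij : Function.Bijective Φ := by
    rw [Function.bijective_iff_existsUnique]
    rintro ⟨σ, h1, h2, h3⟩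
    set t0 : (Σ i : Fin n, Fin (D i)) → Fin n := fun x => (σ x).1 with ht0
    have ht0c : ∀ i j, Nat.card (Ablk t0 i j) = ω i j := h3
    set f0 : ∀ p : PairsLT n, Ablk t0 p.1.1 p.1.2 ≃ Ablk t0 p.1.2 p.1.1 := fun p =>
      { toFun := fun y => ⟨σ ↑y, y.2.2, show (σ (σ ↑y)).1 = p.1.1 by rw [h1]; exact y.2.1⟩
        invFun := fun y => ⟨σ ↑y, y.2.2, show (σ (σ ↑y)).1 = p.1.2 by rw [h1]; exact y.2.1⟩
        left_inv := fun y => Subtype.ext (h1 ↑y)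
        right_inv := fun y => Subtype.ext (h1 ↑y) } with hf0
    set v0 : ∀ i, {u : Equiv.Perm (Ablk t0 i i) // (∀ x, u (u x) = x) ∧ ∀ x, u x ≠ x} :=
      fun i =>
      ⟨{ toFun := fun y => ⟨σ ↑y, y.2.2, show (σ (σ ↑y)).1 = i by rw [h1]; exact y.2.1⟩
         invFun := fun y => ⟨σ ↑y, y.2.2, show (σ (σ ↑y)).1 = i by rw [h1]; exact y.2.1⟩
         left_inv := fun y => Subtype.ext (h1 ↑y)
         right_inv := fun y => Subtype.ext (h1 ↑y) },
        fun y => Subtype.ext (h1 ↑y),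
        fun y hy => h2 ↑y (congrArg Subtype.val hy)⟩ with hv0
    refine ⟨⟨⟨t0, ht0c⟩, f0, v0⟩, ?_, ?_⟩
    · apply Subtype.ext
      apply Equiv.ext
      intro x
      show mglue t0 f0 (fun i => (v0 i).1) x = σ x
      rcases lt_trichotomy x.1 (t0 x) with h | h | h
      · rw [mglue_lt t0 f0 (fun i => (v0 i).1) x.1 (t0 x) h x ⟨rfl, rfl⟩]; rfl
      · rw [mglue_diag t0 f0 (fun i => (v0 i).1) x.1 x ⟨rfl, h.symm⟩]; rfl
      · rw [mglue_gt t0 f0 (fun i => (v0 i).1) (t0 x) x.1 h x ⟨rfl, rfl⟩]; rfl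
    · rintro ⟨⟨t, htc⟩, f, v⟩ heq
      have hval : ∀ x, mglue t f (fun i => (v i).1) x = σ x := fun x =>
        congrFun (congrArg (fun (e : Equiv.Perm (Σ i : Fin n, Fin (D i))) =>
          (e : (Σ i : Fin n, Fin (D i)) → (Σ i : Fin n, Fin (D i))))
          (congrArg Subtype.val heq)) x
      have htt : t = t0 := by
        funext x
        show t x = (σ x).1
        rw [← hval x]
        exact ((mglue_fst t f (fun i => (v i).1) x).1).symm
      subst htt
      have hf : f = f0 := by
        funext p
        apply Equiv.ext
        intro y
        apply Subtype.ext
        have h5 := hval ↑y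
        rw [mglue_lt t0 f (fun i => (v i).1) p.1.1 p.1.2 p.2 ↑y y.2] at h5
        exact h5
      subst hf
      have hv : v = v0 := by
        funext i
        apply Subtype.ext
        apply Equiv.ext
        intro y
        apply Subtype.ext
        have h5 := hval ↑y
        rw [mglue_diag t0 f0 (fun i => (v i).1) i ↑y y.2] at h5
        exact h5
      subst hv
      rfl
  -- counting
  letI : Fintype T := Fintype.ofFinite T
  have hN : Nat.card {σ : Equiv.Perm (Σ i : Fin n, Fin (D i)) //
      (∀ x, σ (σ x) = x) ∧ (∀ x, σ x ≠ x) ∧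
      ∀ i j : Fin n,
        Nat.card {x : Σ i' : Fin n, Fin (D i') // x.1 = i ∧ (σ x).1 = j} = ω i j}
      = ∑ tt : T, Nat.card (M tt) := by
    rw [← Nat.card_eq_of_bijective Φ hbij, natCard_sigma]
  have hMt : ∀ tt : T, Nat.card (M tt) *
      (∏ i, Nat.factorial (ω i i / 2) * 2 ^ (ω i i / 2)) =
      (∏ p : PairsLT n, (ω p.1.1 p.1.2).factorial) * ∏ i, (ω i i).factorial := by
    intro tt
    have hcard : ∀ i j, Nat.card (Ablk tt.1 i j) = ω i j := tt.2
    have h6 : Nat.card (M tt) = (∏ p : PairsLT n, (ω p.1.1 p.1.2).factorial) *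
        ∏ i, Nat.card {u : Equiv.Perm (Ablk tt.1 i i) //
          (∀ x, u (u x) = x) ∧ ∀ x, u x ≠ x} := by
      rw [hM, Nat.card_prod, Nat.card_pi, Nat.card_pi]
      congr 1
      refine Finset.prod_congr rfl fun p _ => ?_
      rw [natCard_equiv_of_card_eq (by rw [hcard, hcard, hsym]), hcard]
    rw [h6, mul_assoc, ← Finset.prod_mul_distrib]
    congr 1
    refine Finset.prod_congr rfl fun i _ => ?_
    have hev : 2 * (ω i i / 2) = ω i i := by
      obtain ⟨k, hk⟩ := heven i
      omega
    have hcc : Fintype.card (Ablk tt.1 i i) = 2 * (ω i i / 2) := by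
      rw [← Nat.card_eq_fintype_card, hcard i i, hev]
    rw [card_fpf (ω i i / 2) (Ablk tt.1 i i) hcc, hev]
  set Ti : Fin n → Type := fun i =>
    {u : Fin (D i) → Fin n // ∀ j, Nat.card {a : Fin (D i) // u a = j} = ω i j} with hTi
  have eqT : T ≃ ∀ i, Ti i :=
    { toFun := fun t => fun i => ⟨fun a => t.1 ⟨i, a⟩, fun j =>
        (Nat.card_congr (fiber_equiv (β := fun i' => Fin (D i')) (fun x => t.1 x = j) i)).symm.trans (t.2 i j)⟩
      invFun := fun u => ⟨fun x => (u x.1).1 x.2, fun i j =>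
        (Nat.card_congr (fiber_equiv (β := fun i' => Fin (D i')) (fun x => (u x.1).1 x.2 = j) i)).trans ((u i).2 j)⟩
      left_inv := fun t => Subtype.ext (funext fun x => rfl)
      right_inv := fun u => funext fun i => Subtype.ext rfl }
  have hTcard : Nat.card T = ∏ i, Nat.card (Ti i) := by
    rw [Nat.card_congr eqT, Nat.card_pi]
  have hTic : ∀ i, Nat.card (Ti i) * ∏ j, (ω i j).factorial = (D i).factorial := by
    intro i
    have h7 := card_fiber_fns n (ω i) (Fin (D i)) (by simp [hdeg i])
    rw [Fintype.card_fin] at h7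
    exact h7
  have hKl : (∏ p : PairsLT n, (ω p.1.1 p.1.2).factorial) =
      ∏ p ∈ Finset.univ.filter (fun p : Fin n × Fin n => p.1 < p.2),
        Nat.factorial (ω p.1 p.2) :=
    (Finset.prod_subtype (Finset.univ.filter (fun p : Fin n × Fin n => p.1 < p.2))
      (fun p => by simp) (fun p => (ω p.1 p.2).factorial)).symm
  rw [hN, ← mul_assoc, Finset.sum_mul, Finset.sum_congr rfl (fun tt _ => hMt tt),
    Finset.sum_const, Finset.card_univ, smul_eq_mul, ← Nat.card_eq_fintype_card, hTcard,
    hKl]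
  set Kl := ∏ p ∈ Finset.univ.filter (fun p : Fin n × Fin n => p.1 < p.2),
    Nat.factorial (ω p.1 p.2) with hKldef
  have harr : (∏ i, Nat.card (Ti i)) * (Kl * ∏ i, (ω i i).factorial) * Kl =
      (∏ i, Nat.card (Ti i)) * (Kl * Kl * ∏ i, (ω i i).factorial) := by ring
  rw [harr, ← prod_sq_split n ω hsym, ← Finset.prod_mul_distrib]
  exact Finset.prod_congr rfl fun i _ => hTic i
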